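/- The series ∑_{t=1}^∞ 1/u_t² converges and its sum is strictly less than 1/7, where u_t = 2(√5 t − {t φ} + 1/2). -/
import Mathlib


open Real

/-- The fractional part of the golden ratio. -/
noncomputable def goldenφ : ℝ := (Real.sqrt 5 - 1) / 2

/-- `u_t = 2(√5 t − {t φ} + 1/2)` for `t ≥ 1`. -/
noncomputable def uval (t : ℕ) : ℝ :=
  2 * (Real.sqrt 5 * t - Int.fract ((t : ℝ) * goldenφ) + 1 / 2)

lemma tele_hasSum : HasSum (fun n : ℕ => (1:ℝ)/(n+1) - 1/(n+2)) 1 := by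
  rw [hasSum_iff_tendsto_nat_of_nonneg]
  · have h : ∀ n : ℕ, ∑ i ∈ Finset.range n, ((1:ℝ)/(i+1) - 1/(i+2)) = 1 - 1/(n+1) := by
      intro n
      induction n with
      | zero => simp
      | succ k ih =>
        rw [Finset.sum_range_succ, ih]
        have h1 : ((k:ℝ)+1) ≠ 0 := by positivity
        have h2 : ((k:ℝ)+2) ≠ 0 := by positivity
        push_cast
        field_simp
        ring
    simp only [h]
    have : Filter.Tendsto (fun n : ℕ => 1 - 1/((n:ℝ)+1)) Filter.atTop (nhds (1 - 0)) :=
      Filter.Tendsto.const_sub _ tendsto_one_div_add_atTop_nhds_zero_nat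
    simpa using this
  · intro n
    have h1 : (0:ℝ) < (n:ℝ)+1 := by positivity
    rw [sub_nonneg]
    apply one_div_le_one_div_of_le h1
    linarith

noncomputable def gmaj (t : ℕ) : ℝ :=
  if t = 0 then 1/(21 - 4*Real.sqrt 5) else 1/(20*t*(t+1))

lemma gmaj_hasSum : HasSum gmaj (1/20 + 1/(21 - 4*Real.sqrt 5)) := by
  have h1 : HasSum (fun n : ℕ => gmaj (n+1)) (1/20) := by
    have h2 : HasSum (fun n : ℕ => (1/20) * ((1:ℝ)/(n+1) - 1/(n+2))) ((1/20) * 1) :=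
      tele_hasSum.mul_left _
    have heq : (fun n : ℕ => gmaj (n+1)) = fun n : ℕ => (1/20) * ((1:ℝ)/(n+1) - 1/(n+2)) := by
      funext n
      have hn1 : ((n:ℝ)+1) ≠ 0 := by positivity
      have hn2 : ((n:ℝ)+2) ≠ 0 := by positivity
      simp only [gmaj, Nat.succ_ne_zero, if_false]
      push_cast
      field_simp
      ring
    rw [heq]
    simpa using h2
  have := (hasSum_nat_add_iff (f := gmaj) 1).mp h1
  simpa [gmaj] using this

/-- The series `∑_{t=1}^∞ 1/u_t²` converges and its sum is strictly less than `1/7`. -/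
theorem sum_inv_uval_sq_lt :
    Summable (fun t : ℕ => 1 / (uval (t + 1)) ^ 2) ∧
    ∑' t : ℕ, 1 / (uval (t + 1)) ^ 2 < 1 / 7 := by
  have hs2 : (Real.sqrt 5)^2 = 5 := Real.sq_sqrt (by norm_num)
  have hs0 : (0:ℝ) ≤ Real.sqrt 5 := Real.sqrt_nonneg 5
  set s := Real.sqrt 5 with hs
  have hslb : (2:ℝ) ≤ s := by nlinarith
  have hsub : s ≤ 9/4 := by nlinarith [sq_nonneg (s - 9/4)]
  have hkey : ∀ t : ℕ, 1 / (uval (t+1))^2 ≤ gmaj t := by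
    intro t
    have hfr0 : 0 ≤ Int.fract (((t+1:ℕ) : ℝ) * goldenφ) := Int.fract_nonneg _
    have hfr1 : Int.fract (((t+1:ℕ) : ℝ) * goldenφ) < 1 := Int.fract_lt_one _
    have ht0 : (0:ℝ) ≤ (t:ℝ) := Nat.cast_nonneg t
    have hL : (0:ℝ) < 2*s*((t:ℝ)+1) - 1 := by nlinarith
    have hLu : 2*s*((t:ℝ)+1) - 1 ≤ uval (t+1) := by
      unfold uval
      rw [← hs]
      push_cast at hfr0 hfr1 ⊢
      nlinarith
    have hu : (0:ℝ) < uval (t+1) := lt_of_lt_of_le hL hLu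
    have hsq : (2*s*((t:ℝ)+1) - 1)^2 ≤ (uval (t+1))^2 := by
      apply pow_le_pow_left₀ hL.le hLu
    have hstep : 1 / (uval (t+1))^2 ≤ 1 / (2*s*((t:ℝ)+1) - 1)^2 :=
      one_div_le_one_div_of_le (by positivity) hsq
    rcases Nat.eq_zero_or_pos t with h0 | hp
    · subst h0
      simp only [gmaj, if_true]
      refine hstep.trans (le_of_eq ?_)
      have heq : (2*s*(((0:ℕ):ℝ)+1) - 1)^2 = 21 - 4*s := by
        push_cast
        linear_combination 4*hs2
      rw [heq, ← hs]
    · have ht1 : (1:ℝ) ≤ (t:ℝ) := by exact_mod_cast hp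
      simp only [gmaj, Nat.pos_iff_ne_zero.mp hp, if_false]
      refine hstep.trans ?_
      apply one_div_le_one_div_of_le
      · positivity
      · nlinarith
  have hnn : ∀ t : ℕ, 0 ≤ 1 / (uval (t+1))^2 := by
    intro t; positivity
  have hsumm : Summable (fun t : ℕ => 1 / (uval (t + 1)) ^ 2) :=
    Summable.of_nonneg_of_le hnn hkey gmaj_hasSum.summable
  refine ⟨hsumm, ?_⟩
  have hle := Summable.tsum_le_tsum hkey hsumm gmaj_hasSum.summable
  rw [gmaj_hasSum.tsum_eq] at hle
  refine lt_of_le_of_lt hle ?_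
  rw [← hs]
  have h21 : (0:ℝ) < 21 - 4*s := by nlinarith
  rw [div_add_div _ _ (by norm_num) (ne_of_gt h21), div_lt_div_iff₀ (by positivity) (by norm_num)]
  nlinarith
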